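/- Comparison of the extreme field configurations (Theorem 3.4(b)): Let B_det : ℝ² → ℝ and V : ℝ² → ℝ be bounded, let μ ∈ (0,1], let ρ > ln 2, and let u : ℝ² → [0,1] be continuous with compact support such that U(x) := Σ_{z∈ℤ²} u(x−z) satisfies U(x) ≥ c_u for all x ∈ ℝ², where c_u > 0. Let (m₋^{(k)})_{k≥0} and (m₊^{(k)})_{k≥0} be real sequences with m₋^{(k)} ≤ m₊^{(k)} and |m₋^{(k)}|, |m₊^{(k)}| ≤ e^{−ρk} for all k. Define B_±(x) := B_det(x) + μ Σ_{k=0}^∞ m_±^{(k)} Σ_{z∈(2^{-k}ℤ)²} u(2^k(x−z)), M_± := Σ_{k=0}^∞ m_±^{(k)}, E_inf := inf_{x∈ℝ²} ( B_−(x) + V(x) ), and E_sup := inf_{x∈ℝ²} ( B_+(x) + V(x) ). Then E_inf + μ c_u (M₊ − M₋) ≤ E_sup. -/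

import Mathlib

noncomputable section

/-- The periodization `U(x) = Σ_{z ∈ ℤ²} u(x - z)`. -/
def periodization (u : ℝ × ℝ → ℝ) (x : ℝ × ℝ) : ℝ :=
  ∑' z : ℤ × ℤ, u (x - ((z.1 : ℝ), (z.2 : ℝ)))

/-- The field corresponding to the extreme configuration `m`:
`B_m(x) = B_det(x) + μ Σ_k m_k Σ_{z ∈ (2⁻ᵏℤ)²} u(2ᵏ(x - z))`. -/
def extremeField (Bdet : ℝ × ℝ → ℝ) (μ : ℝ) (u : ℝ × ℝ → ℝ) (m : ℕ → ℝ)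
    (x : ℝ × ℝ) : ℝ :=
  Bdet x + μ * ∑' k : ℕ, m k *
    ∑' z : ℤ × ℤ, u ((2 : ℝ) ^ k • (x - ((2 : ℝ) ^ k)⁻¹ • ((z.1 : ℝ), (z.2 : ℝ))))

/-- Comparison of the extreme field configurations (Theorem 3.4(b)):
`E_inf + μ c_u (M₊ - M₋) ≤ E_sup`. -/
theorem stmt15 (Bdet V : ℝ × ℝ → ℝ) (MB MV : ℝ)
    (hBbd : ∀ x, |Bdet x| ≤ MB) (hVbd : ∀ x, |V x| ≤ MV)
    (μ : ℝ) (hμ : μ ∈ Set.Ioc (0 : ℝ) 1)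
    (ρ : ℝ) (hρ : Real.log 2 < ρ)
    (u : ℝ × ℝ → ℝ) (hu : Continuous u) (hus : HasCompactSupport u)
    (hu01 : ∀ x, u x ∈ Set.Icc (0 : ℝ) 1)
    (c_u : ℝ) (hcu : 0 < c_u) (hU : ∀ x : ℝ × ℝ, c_u ≤ periodization u x)
    (mm mp : ℕ → ℝ) (hmle : ∀ k, mm k ≤ mp k)
    (hmm : ∀ k, |mm k| ≤ Real.exp (-ρ * k)) (hmp : ∀ k, |mp k| ≤ Real.exp (-ρ * k)) :
    (⨅ x : ℝ × ℝ, (extremeField Bdet μ u mm x + V x)) +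
        μ * c_u * ((∑' k : ℕ, mp k) - ∑' k : ℕ, mm k)
      ≤ ⨅ x : ℝ × ℝ, (extremeField Bdet μ u mp x + V x) := by
  obtain ⟨hμ0, hμ1⟩ := hμ
  -- a radius containing the support of u
  obtain ⟨R₀, hRsub₀⟩ := hus.isBounded.subset_closedBall 0
  set R : ℝ := max R₀ 0 with hRdef
  have hR0 : 0 ≤ R := le_max_right _ _
  have hRsub : tsupport u ⊆ Metric.closedBall 0 R :=
    hRsub₀.trans (Metric.closedBall_subset_closedBall (le_max_left _ _))
  -- the box containing the support of z ↦ u (x - z)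
  set S : ℝ × ℝ → Finset (ℤ × ℤ) := fun x =>
    Finset.Icc ⌈x.1 - R⌉ ⌊x.1 + R⌋ ×ˢ Finset.Icc ⌈x.2 - R⌉ ⌊x.2 + R⌋ with hSdef
  have hzero : ∀ x : ℝ × ℝ, ∀ z : ℤ × ℤ, z ∉ S x → u (x - ((z.1 : ℝ), (z.2 : ℝ))) = 0 := by
    intro x z hz
    by_contra h
    have hmem : x - ((z.1 : ℝ), (z.2 : ℝ)) ∈ tsupport u := subset_tsupport u h
    have hball := hRsub hmem
    rw [Metric.mem_closedBall, dist_zero_right] at hball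
    have h1 : |x.1 - (z.1 : ℝ)| ≤ R := by
      have := (norm_fst_le (x - ((z.1 : ℝ), (z.2 : ℝ)))).trans hball
      simpa [Real.norm_eq_abs] using this
    have h2 : |x.2 - (z.2 : ℝ)| ≤ R := by
      have := (norm_snd_le (x - ((z.1 : ℝ), (z.2 : ℝ)))).trans hball
      simpa [Real.norm_eq_abs] using this
    rw [abs_le] at h1 h2
    apply hz
    rw [hSdef, Finset.mem_product, Finset.mem_Icc, Finset.mem_Icc]
    refine ⟨⟨Int.ceil_le.mpr ?_, Int.le_floor.mpr ?_⟩, ⟨Int.ceil_le.mpr ?_, Int.le_floor.mpr ?_⟩⟩ <;>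
      linarith [h1.1, h1.2, h2.1, h2.2]
  have hUnn : ∀ x, 0 ≤ periodization u x := fun x =>
    tsum_nonneg fun z => (hu01 _).1
  -- cardinality bound for the box
  have hcard : ∀ a : ℝ, ((Finset.Icc ⌈a - R⌉ ⌊a + R⌋).card : ℝ) ≤ 2 * R + 2 := by
    intro a
    rw [Int.card_Icc]
    have h1 : (a - R : ℝ) ≤ (⌈a - R⌉ : ℝ) := Int.le_ceil _
    have h2 : ((⌊a + R⌋ : ℤ) : ℝ) ≤ a + R := Int.floor_le _
    rcases le_or_gt (⌊a + R⌋ + 1 - ⌈a - R⌉) 0 with h | h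
    · rw [Int.toNat_of_nonpos h]; norm_num; linarith
    · have h3 : (((⌊a + R⌋ + 1 - ⌈a - R⌉).toNat : ℕ) : ℝ)
          = (⌊a + R⌋ : ℝ) + 1 - (⌈a - R⌉ : ℝ) := by
        rw [← Int.cast_natCast, Int.toNat_of_nonneg h.le]; push_cast; ring
      rw [h3]; linarith
  set C : ℝ := (2 * R + 2) ^ 2 with hCdef
  have hC0 : 0 ≤ C := by positivity
  have hUle : ∀ x, periodization u x ≤ C := by
    intro x
    rw [periodization, tsum_eq_sum (hzero x)]
    have h1 : ∑ z ∈ S x, u (x - ((z.1 : ℝ), (z.2 : ℝ))) ≤ (S x).card • (1 : ℝ) :=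
      Finset.sum_le_card_nsmul _ _ 1 fun z _ => (hu01 _).2
    have h2 : ((S x).card : ℝ) ≤ C := by
      rw [hSdef, Finset.card_product, hCdef, sq]
      push_cast
      exact mul_le_mul (hcard x.1) (hcard x.2) (by positivity) (by linarith)
    calc _ ≤ (S x).card • (1 : ℝ) := h1
      _ = ((S x).card : ℝ) := by simp
      _ ≤ C := h2
  -- geometric bound
  have hexplt : Real.exp (-ρ) < 1 := by
    rw [show (1 : ℝ) = Real.exp 0 by simp]
    exact Real.exp_lt_exp.mpr (by linarith [Real.log_pos one_lt_two])
  have hgeom : Summable fun k : ℕ => Real.exp (-ρ) ^ k :=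
    summable_geometric_of_lt_one (Real.exp_pos _).le hexplt
  have hexp : ∀ k : ℕ, Real.exp (-ρ * k) = Real.exp (-ρ) ^ k := fun k => by
    rw [mul_comm, Real.exp_nat_mul]
  -- summability of m
  have hsumm : ∀ m : ℕ → ℝ, (∀ k, |m k| ≤ Real.exp (-ρ * k)) → Summable m := by
    intro m hm
    exact Summable.of_norm_bounded hgeom fun k => by
      rw [Real.norm_eq_abs]; exact (hm k).trans_eq (hexp k)
  -- rewriting extremeField via periodization
  have hEF : ∀ (m : ℕ → ℝ) (x : ℝ × ℝ), extremeField Bdet μ u m x =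
      Bdet x + μ * ∑' k : ℕ, m k * periodization u ((2 : ℝ) ^ k • x) := by
    intro m x
    have h : ∀ (k : ℕ) (z : ℤ × ℤ),
        (2 : ℝ) ^ k • (x - ((2 : ℝ) ^ k)⁻¹ • ((z.1 : ℝ), (z.2 : ℝ)))
          = (2 : ℝ) ^ k • x - ((z.1 : ℝ), (z.2 : ℝ)) := by
      intro k z
      rw [smul_sub, smul_inv_smul₀ (by positivity : ((2 : ℝ) ^ k) ≠ 0)]
    simp only [extremeField, h, periodization]
  -- summability of k ↦ m k * U(2^k x)
  have hsumU : ∀ (m : ℕ → ℝ), (∀ k, |m k| ≤ Real.exp (-ρ * k)) → ∀ x : ℝ × ℝ,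
      Summable fun k : ℕ => m k * periodization u ((2 : ℝ) ^ k • x) := by
    intro m hm x
    refine Summable.of_norm_bounded (g := fun k => C * Real.exp (-ρ) ^ k) (hgeom.mul_left C)
      fun k => ?_
    rw [Real.norm_eq_abs, abs_mul, abs_of_nonneg (hUnn _)]
    calc |m k| * periodization u ((2 : ℝ) ^ k • x)
        ≤ Real.exp (-ρ) ^ k * C :=
          mul_le_mul ((hm k).trans_eq (hexp k)) (hUle _) (hUnn _) (by positivity)
      _ = C * Real.exp (-ρ) ^ k := mul_comm _ _
  -- uniform bound on the series
  set T : ℝ := ∑' k : ℕ, C * Real.exp (-ρ) ^ k with hTdef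
  have hTbd : ∀ (m : ℕ → ℝ), (∀ k, |m k| ≤ Real.exp (-ρ * k)) → ∀ x : ℝ × ℝ,
      |∑' k : ℕ, m k * periodization u ((2 : ℝ) ^ k • x)| ≤ T := by
    intro m hm x
    have hnorm : Summable fun k : ℕ => ‖m k * periodization u ((2 : ℝ) ^ k • x)‖ := by
      refine (hgeom.mul_left C).of_nonneg_of_le (fun k => norm_nonneg _) fun k => ?_
      rw [Real.norm_eq_abs, abs_mul, abs_of_nonneg (hUnn _)]
      calc |m k| * periodization u ((2 : ℝ) ^ k • x)
          ≤ Real.exp (-ρ) ^ k * C :=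
            mul_le_mul ((hm k).trans_eq (hexp k)) (hUle _) (hUnn _) (by positivity)
        _ = C * Real.exp (-ρ) ^ k := mul_comm _ _
    calc |∑' k : ℕ, m k * periodization u ((2 : ℝ) ^ k • x)|
        ≤ ∑' k : ℕ, ‖m k * periodization u ((2 : ℝ) ^ k • x)‖ :=
          norm_tsum_le_tsum_norm hnorm
      _ ≤ T := by
          refine Summable.tsum_le_tsum (fun k => ?_) hnorm (hgeom.mul_left C)
          rw [Real.norm_eq_abs, abs_mul, abs_of_nonneg (hUnn _)]
          calc |m k| * periodization u ((2 : ℝ) ^ k • x)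
              ≤ Real.exp (-ρ) ^ k * C :=
                mul_le_mul ((hm k).trans_eq (hexp k)) (hUle _) (hUnn _) (by positivity)
            _ = C * Real.exp (-ρ) ^ k := mul_comm _ _
  -- bounded below
  have hbdd : BddBelow (Set.range fun x : ℝ × ℝ => extremeField Bdet μ u mm x + V x) := by
    refine ⟨-(MB + MV) - μ * T, ?_⟩
    rintro y ⟨x, rfl⟩
    dsimp only
    rw [hEF]
    have h1 := abs_le.mp (hBbd x)
    have h2 := abs_le.mp (hVbd x)
    have h3 := abs_le.mp (hTbd mm hmm x)
    nlinarith [h3.1, h3.2, h1.1, h2.1]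
  -- pointwise comparison
  have hmain : ∀ x : ℝ × ℝ, extremeField Bdet μ u mm x + V x
      + μ * c_u * ((∑' k : ℕ, mp k) - ∑' k : ℕ, mm k)
      ≤ extremeField Bdet μ u mp x + V x := by
    intro x
    rw [hEF, hEF]
    have hsmm := hsumm mm hmm
    have hsmp := hsumm mp hmp
    have hd : Summable fun k => mp k - mm k := hsmp.sub hsmm
    have hM : (∑' k : ℕ, mp k) - ∑' k : ℕ, mm k = ∑' k : ℕ, (mp k - mm k) :=
      (Summable.tsum_sub hsmp hsmm).symm
    have hsUm := hsumU mm hmm x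
    have hsUp := hsumU mp hmp x
    have hsUd : Summable fun k : ℕ => (mp k - mm k) * periodization u ((2 : ℝ) ^ k • x) := by
      have : (fun k : ℕ => (mp k - mm k) * periodization u ((2 : ℝ) ^ k • x))
          = fun k : ℕ => mp k * periodization u ((2 : ℝ) ^ k • x)
            - mm k * periodization u ((2 : ℝ) ^ k • x) := by
        funext k; ring
      rw [this]; exact hsUp.sub hsUm
    have hdiff : (∑' k : ℕ, mp k * periodization u ((2 : ℝ) ^ k • x))
        - ∑' k : ℕ, mm k * periodization u ((2 : ℝ) ^ k • x)
        = ∑' k : ℕ, (mp k - mm k) * periodization u ((2 : ℝ) ^ k • x) := by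
      rw [← Summable.tsum_sub hsUp hsUm]
      exact tsum_congr fun k => by ring
    have hterm : ∀ k : ℕ, c_u * (mp k - mm k)
        ≤ (mp k - mm k) * periodization u ((2 : ℝ) ^ k • x) := by
      intro k
      rw [mul_comm]
      exact mul_le_mul_of_nonneg_left (hU _) (by linarith [hmle k])
    have hkey : c_u * ((∑' k : ℕ, mp k) - ∑' k : ℕ, mm k)
        ≤ (∑' k : ℕ, mp k * periodization u ((2 : ℝ) ^ k • x))
          - ∑' k : ℕ, mm k * periodization u ((2 : ℝ) ^ k • x) := by
      rw [hM, hdiff, ← tsum_mul_left]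
      exact Summable.tsum_le_tsum hterm (hd.mul_left c_u) hsUd
    nlinarith [mul_le_mul_of_nonneg_left hkey hμ0.le]
  refine le_ciInf fun x => ?_
  have h1 : (⨅ x : ℝ × ℝ, extremeField Bdet μ u mm x + V x)
      ≤ extremeField Bdet μ u mm x + V x := ciInf_le hbdd x
  linarith [hmain x]
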